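/- If Λ ⊂ ℝⁿ is a tile by ℤⁿ (a compact set of positive Lebesgue measure whose ℤⁿ-translates cover ℝⁿ with overlaps of measure zero) such that every neighborhood of every point of Λ meets Λ in positive Lebesgue measure, then the boundary of Λ equals the set Λ^(2) = { x ∈ Λ : (x + (ℤⁿ \ {0})) ∩ Λ ≠ ∅ }. -/

import Mathlib

open Metric Set MeasureTheory

noncomputable section

/-- The real vector associated to an integer vector. -/
def vecReal {n : ℕ} (v : Fin n → ℤ) : Fin n → ℝ := fun i => (v i : ℝ)

/-- `Λ` is a tile by the lattice `ℤⁿ`: a compact set of positive Lebesgue measure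
whose `ℤⁿ`-translates cover `ℝⁿ` and overlap in measure zero. -/
def IsTileByZn {n : ℕ} (Λ : Set (Fin n → ℝ)) : Prop :=
  IsCompact Λ ∧ 0 < volume Λ ∧
    (⋃ z : Fin n → ℤ, (fun x => x + vecReal z) '' Λ) = Set.univ ∧
    ∀ z : Fin n → ℤ, z ≠ 0 → volume (Λ ∩ ((fun x => x + vecReal z) '' Λ)) = 0

lemma vecReal_zero {n : ℕ} : vecReal (0 : Fin n → ℤ) = 0 := by
  funext i; simp [vecReal]

lemma vecReal_neg {n : ℕ} (z : Fin n → ℤ) : vecReal (-z) = -vecReal z := by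
  funext i; simp [vecReal]

/-- for a tile by `ℤⁿ` each of whose points has all its neighborhoods
meeting the tile in positive measure, the boundary equals
`Λ^(2) = { x ∈ Λ : (x + (ℤⁿ \ {0})) ∩ Λ ≠ ∅ }`. -/
theorem stmt4 (n : ℕ) (Λ : Set (Fin n → ℝ)) (hT : IsTileByZn Λ)
    (hloc : ∀ x ∈ Λ, ∀ ε : ℝ, 0 < ε → 0 < volume (Metric.ball x ε ∩ Λ)) :
    frontier Λ = {x ∈ Λ | ∃ z : Fin n → ℤ, z ≠ 0 ∧ x + vecReal z ∈ Λ} := by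
  obtain ⟨hcomp, hpos, hcover, hnull⟩ := hT
  have hclosed : IsClosed Λ := hcomp.isClosed
  obtain ⟨C, hC⟩ := isBounded_iff_forall_norm_le.1 hcomp.isBounded
  ext x
  constructor
  · intro hx
    have hxΛ : x ∈ Λ := by
      have := hx.1
      rwa [hclosed.closure_eq] at this
    refine ⟨hxΛ, ?_⟩
    -- the finite set of relevant lattice vectors
    set M : ℝ := ‖x‖ + 1 + C with hM
    set F : Set (Fin n → ℤ) :=
      {z | z ≠ 0 ∧ (((fun y => y + vecReal z) '' Λ) ∩ ball x 1).Nonempty} with hF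
    have hFfin : F.Finite := by
      have : F ⊆ Set.pi Set.univ (fun _ : Fin n => Set.Icc (-⌈M⌉) ⌈M⌉) := by
        rintro z ⟨hz0, ⟨y, ⟨a, haΛ, hay⟩, hyb⟩⟩
        intro i _
        have hnz : ‖vecReal z‖ ≤ M := by
          have hay' : a + vecReal z = y := hay
          have h1 : ‖a + vecReal z‖ = ‖y‖ := by rw [hay']
          have h2 : ‖y‖ ≤ ‖x‖ + 1 := by
            have hd : dist y x < 1 := mem_ball.1 hyb
            have h4 : ‖y‖ ≤ ‖y - x‖ + ‖x‖ := by
              have := norm_add_le (y - x) x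
              simpa using this
            rw [dist_eq_norm] at hd
            linarith
          have h3 : ‖vecReal z‖ ≤ ‖a + vecReal z‖ + ‖a‖ := by
            have := norm_add_le (a + vecReal z) (-a)
            simpa [add_comm, add_assoc, add_left_comm] using this
          have := hC a haΛ
          rw [h1] at h3
          linarith
        have hzi : |(z i : ℝ)| ≤ M := by
          calc |(z i : ℝ)| = ‖vecReal z i‖ := by simp [vecReal]
            _ ≤ ‖vecReal z‖ := norm_le_pi_norm _ i
            _ ≤ M := hnz
        have hMceil : M ≤ (⌈M⌉ : ℝ) := Int.le_ceil M
        constructor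
        · have : -(⌈M⌉ : ℝ) ≤ (z i : ℝ) := by
            have := neg_abs_le ((z i : ℝ))
            linarith
          exact_mod_cast this
        · have : (z i : ℝ) ≤ (⌈M⌉ : ℝ) := le_trans (le_abs_self _) (le_trans hzi hMceil)
          exact_mod_cast this
      exact Set.Finite.subset (Set.Finite.pi fun _ => Set.finite_Icc _ _) this
    set A : Set (Fin n → ℝ) := ⋃ z ∈ F, (fun y => y + vecReal z) '' Λ with hA
    have hAclosed : IsClosed A :=
      hFfin.isClosed_biUnion fun z _ =>
        (hcomp.image (continuous_id.add continuous_const)).isClosed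
    have hsub : Λᶜ ∩ ball x 1 ⊆ A := by
      rintro y ⟨hyc, hyb⟩
      have : y ∈ ⋃ z : Fin n → ℤ, (fun x => x + vecReal z) '' Λ := by
        rw [hcover]; trivial
      obtain ⟨z, hz⟩ := Set.mem_iUnion.1 this
      have hz0 : z ≠ 0 := by
        rintro rfl
        rw [vecReal_zero] at hz
        simp at hz
        exact hyc hz
      exact Set.mem_biUnion ⟨hz0, ⟨y, hz, hyb⟩⟩ hz
    have hxA : x ∈ A := by
      rw [← hAclosed.closure_eq]
      refine closure_mono hsub ?_
      rw [mem_closure_iff_nhds]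
      intro U hU
      have hx2 : x ∈ closure Λᶜ := by
        rw [frontier_eq_closure_inter_closure] at hx
        exact hx.2
      rw [mem_closure_iff_nhds] at hx2
      obtain ⟨y, hyU, hyc⟩ := hx2 (U ∩ ball x 1) (Filter.inter_mem hU (ball_mem_nhds x one_pos))
      exact ⟨y, hyU.1, hyc, hyU.2⟩
    rw [hA, Set.mem_iUnion₂] at hxA
    obtain ⟨z, hzF, a, haΛ, hax⟩ := hxA
    have hax' : a + vecReal z = x := hax
    refine ⟨-z, neg_ne_zero.2 hzF.1, ?_⟩
    rw [vecReal_neg, ← hax']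
    simpa using haΛ
  · rintro ⟨hxΛ, z, hz0, hxz⟩
    rw [frontier, hclosed.closure_eq]
    refine ⟨hxΛ, ?_⟩
    intro hint
    obtain ⟨ε, hε, hball⟩ := Metric.isOpen_iff.1 isOpen_interior x hint
    have hball' : ball x ε ⊆ Λ := hball.trans interior_subset
    have hpos' := hloc (x + vecReal z) hxz ε hε
    have himg : ball (x + vecReal z) ε ∩ Λ ⊆ Λ ∩ ((fun y => y + vecReal z) '' Λ) := by
      rintro y ⟨hy1, hy2⟩
      refine ⟨hy2, ?_⟩
      have : ball (x + vecReal z) ε = (fun w => w + vecReal z) '' ball x ε := by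
        simpa using ((IsometryEquiv.addRight (vecReal z)).image_ball x ε).symm
      rw [this] at hy1
      obtain ⟨w, hw, rfl⟩ := hy1
      exact ⟨w, hball' hw, rfl⟩
    have : volume (ball (x + vecReal z) ε ∩ Λ) ≤ volume (Λ ∩ ((fun y => y + vecReal z) '' Λ)) := measure_mono himg
    rw [hnull z hz0] at this
    exact absurd (le_antisymm this zero_le) (ne_of_gt hpos')
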